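/- Let X, Y be compact metric spaces and R an optimal correspondence between X and Y, i.e., dis R = 2·d_GH(X,Y). Then for every t ∈ [0,1], with R_0 = X, R_1 = Y, and R_t = (R, d_t) for t ∈ (0,1), the point R_t lies on the metric segment [X,Y]: d_GH(X, R_t) + d_GH(R_t, Y) = d_GH(X,Y); moreover d_GH(X,R_t) = t·d_GH(X,Y) and d_GH(R_t,Y) = (1−t)·d_GH(X,Y). -/

import Mathlib

open scoped ENNReal

/-- A correspondence between `X` and `Y`: a relation whose projections are surjective. -/
def IsCorr {X Y : Type*} (R : Set (X × Y)) : Prop :=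
  (∀ x : X, ∃ y : Y, (x, y) ∈ R) ∧ (∀ y : Y, ∃ x : X, (x, y) ∈ R)

/-- The distortion of a relation: `sup |d(x,x') - d(y,y')|` over pairs in `R`. -/
noncomputable def corrDis {X Y : Type*} [MetricSpace X] [MetricSpace Y]
    (R : Set (X × Y)) : ℝ≥0∞ :=
  ⨆ p ∈ R, ⨆ q ∈ R, edist (dist p.1 q.1) (dist p.2 q.2)

/-- The Gromov–Hausdorff distance: half the infimal distortion of correspondences. -/
noncomputable def ghDist (X Y : Type*) [MetricSpace X] [MetricSpace Y] : ℝ≥0∞ :=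
  (⨅ (R : Set (X × Y)) (_ : IsCorr R), corrDis R) / 2

section Aux

variable {X Y Z : Type*} [MetricSpace X] [MetricSpace Y] [MetricSpace Z]

lemma le_corrDis {R : Set (X × Y)} {p q : X × Y} (hp : p ∈ R) (hq : q ∈ R) :
    edist (dist p.1 q.1) (dist p.2 q.2) ≤ corrDis R :=
  le_iSup₂_of_le p hp (le_iSup₂_of_le q hq le_rfl)

lemma corrDis_le {R : Set (X × Y)} {c : ℝ≥0∞}
    (h : ∀ p ∈ R, ∀ q ∈ R, edist (dist p.1 q.1) (dist p.2 q.2) ≤ c) : corrDis R ≤ c :=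
  iSup₂_le fun p hp => iSup₂_le fun q hq => h p hp q hq

lemma two_ghDist (X Y : Type*) [MetricSpace X] [MetricSpace Y] :
    2 * ghDist X Y = ⨅ (R : Set (X × Y)) (_ : IsCorr R), corrDis R :=
  ENNReal.mul_div_cancel two_ne_zero ENNReal.ofNat_ne_top

lemma half_le_half {a b : ℝ≥0∞} (h : 2 * a ≤ 2 * b) : a ≤ b :=
  (ENNReal.mul_le_mul_iff_right two_ne_zero ENNReal.ofNat_ne_top).mp h

lemma two_ghDist_le {S : Set (X × Y)} (hS : IsCorr S) : 2 * ghDist X Y ≤ corrDis S := by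
  rw [two_ghDist]; exact iInf₂_le S hS

/-- "Triangle inequality" via composition of correspondences. -/
lemma two_ghDist_le_add {S1 : Set (X × Z)} {S2 : Set (Z × Y)}
    (h1 : IsCorr S1) (h2 : IsCorr S2) :
    2 * ghDist X Y ≤ corrDis S1 + corrDis S2 := by
  set C : Set (X × Y) := {p | ∃ z, (p.1, z) ∈ S1 ∧ (z, p.2) ∈ S2} with hCdef
  have hC : IsCorr C := by
    constructor
    · intro x
      obtain ⟨z, hz⟩ := h1.1 x
      obtain ⟨y, hy⟩ := h2.1 z
      exact ⟨y, z, hz, hy⟩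
    · intro y
      obtain ⟨z, hz⟩ := h2.2 y
      obtain ⟨x, hx⟩ := h1.2 z
      exact ⟨x, z, hx, hz⟩
  refine le_trans (two_ghDist_le hC) (corrDis_le ?_)
  rintro p ⟨z, hz1, hz2⟩ q ⟨w, hw1, hw2⟩
  calc edist (dist p.1 q.1) (dist p.2 q.2)
      ≤ edist (dist p.1 q.1) (dist z w) + edist (dist z w) (dist p.2 q.2) :=
        edist_triangle _ _ _
    _ ≤ corrDis S1 + corrDis S2 :=
        add_le_add (le_corrDis hz1 hw1) (le_corrDis hz2 hw2)

end Aux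

/-- If `R` is an optimal correspondence between compact `X` and `Y`
(`dis R = 2 d_GH(X,Y)`), then for `t ∈ (0,1)` the space `R_t` lies on the metric
segment `[X,Y]`, with `d_GH(X,R_t) = t·d_GH(X,Y)` and `d_GH(R_t,Y) = (1-t)·d_GH(X,Y)`.
(The endpoint cases `R_0 = X`, `R_1 = Y` hold trivially.) -/
theorem stmt14 {X Y : Type*} [mX : MetricSpace X] [mY : MetricSpace Y]
    [CompactSpace X] [CompactSpace Y]
    (R : Set (X × Y)) (hR : IsCorr R) (hopt : corrDis R = 2 * ghDist X Y)
    (t : ℝ) (ht : t ∈ Set.Ioo (0 : ℝ) 1)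
    (mt : MetricSpace R)
    (hmt : ∀ a b : R, @dist R mt.toDist a b =
      (1 - t) * dist a.1.1 b.1.1 + t * dist a.1.2 b.1.2) :
    @ghDist X R mX mt = ENNReal.ofReal t * ghDist X Y ∧
    @ghDist R Y mt mY = ENNReal.ofReal (1 - t) * ghDist X Y ∧
    @ghDist X R mX mt + @ghDist R Y mt mY = ghDist X Y := by
  obtain ⟨ht0, ht1⟩ := ht
  have ht1' : (0:ℝ) ≤ 1 - t := by linarith
  set g := ghDist X Y with hg
  -- finiteness of g
  have hdisR_fin : corrDis R ≠ ⊤ := by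
    refine ne_top_of_le_ne_top (ENNReal.ofReal_ne_top
      (r := Metric.diam (Set.univ : Set X) + Metric.diam (Set.univ : Set Y))) (corrDis_le ?_)
    intro p _ q _
    rw [edist_dist, Real.dist_eq]
    refine ENNReal.ofReal_le_ofReal ?_
    have h1 : dist p.1 q.1 ≤ Metric.diam (Set.univ : Set X) :=
      Metric.dist_le_diam_of_mem isCompact_univ.isBounded trivial trivial
    have h2 : dist p.2 q.2 ≤ Metric.diam (Set.univ : Set Y) :=
      Metric.dist_le_diam_of_mem isCompact_univ.isBounded trivial trivial
    have := abs_sub_abs_le_abs_sub (dist p.1 q.1) (dist p.2 q.2)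
    rw [abs_sub_le_iff]
    constructor <;> [skip; skip] <;>
      · have := dist_nonneg (x := p.1) (y := q.1)
        have := dist_nonneg (x := p.2) (y := q.2)
        linarith
  have hg_fin : g ≠ ⊤ := by
    intro h
    rw [hopt] at hdisR_fin
    exact hdisR_fin (by rw [h, ENNReal.mul_top (by norm_num)])
  -- the splitting of 1
  have hsplit : ENNReal.ofReal t + ENNReal.ofReal (1 - t) = 1 := by
    rw [← ENNReal.ofReal_add ht0.le ht1']
    norm_num
  -- correspondence between X and R
  set SX : Set (X × R) := {p | p.2.1.1 = p.1} with hSXdef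
  have hSXcorr : IsCorr SX := by
    constructor
    · intro x
      obtain ⟨y, hy⟩ := hR.1 x
      exact ⟨⟨(x, y), hy⟩, rfl⟩
    · intro r
      exact ⟨r.1.1, rfl⟩
  have hSXdis : corrDis SX ≤ ENNReal.ofReal t * corrDis R := by
    refine corrDis_le ?_
    rintro ⟨x, r⟩ (hx : r.1.1 = x) ⟨x', r'⟩ (hx' : r'.1.1 = x')
    have hle : edist (dist r.1.1 r'.1.1) (dist r.1.2 r'.1.2) ≤ corrDis R :=
      le_corrDis r.2 r'.2
    rw [edist_dist, Real.dist_eq, hmt r r', ← hx, ← hx']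
    rw [edist_dist, Real.dist_eq] at hle
    have key : |dist r.1.1 r'.1.1 - ((1 - t) * dist r.1.1 r'.1.1 + t * dist r.1.2 r'.1.2)|
        = t * |dist r.1.1 r'.1.1 - dist r.1.2 r'.1.2| := by
      have e : dist r.1.1 r'.1.1 - ((1 - t) * dist r.1.1 r'.1.1 + t * dist r.1.2 r'.1.2)
          = t * (dist r.1.1 r'.1.1 - dist r.1.2 r'.1.2) := by ring
      rw [e, abs_mul, abs_of_pos ht0]
    rw [key, ENNReal.ofReal_mul ht0.le]
    exact mul_le_mul_right hle _
  -- correspondence between R and Y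
  set P : Set (R × Y) := {p | p.1.1.2 = p.2} with hPdef
  have hPcorr : IsCorr P := by
    constructor
    · intro r
      exact ⟨r.1.2, rfl⟩
    · intro y
      obtain ⟨x, hx⟩ := hR.2 y
      exact ⟨⟨(x, y), hx⟩, rfl⟩
  have hPdis : corrDis P ≤ ENNReal.ofReal (1 - t) * corrDis R := by
    refine corrDis_le ?_
    rintro ⟨r, y⟩ (hy : r.1.2 = y) ⟨r', y'⟩ (hy' : r'.1.2 = y')
    have hle : edist (dist r.1.1 r'.1.1) (dist r.1.2 r'.1.2) ≤ corrDis R :=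
      le_corrDis r.2 r'.2
    rw [edist_dist, Real.dist_eq, hmt r r', ← hy, ← hy']
    rw [edist_dist, Real.dist_eq] at hle
    have key : |(1 - t) * dist r.1.1 r'.1.1 + t * dist r.1.2 r'.1.2 - dist r.1.2 r'.1.2|
        = (1 - t) * |dist r.1.1 r'.1.1 - dist r.1.2 r'.1.2| := by
      have e : (1 - t) * dist r.1.1 r'.1.1 + t * dist r.1.2 r'.1.2 - dist r.1.2 r'.1.2
          = (1 - t) * (dist r.1.1 r'.1.1 - dist r.1.2 r'.1.2) := by ring
      rw [e, abs_mul, abs_of_nonneg ht1']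
    rw [key, ENNReal.ofReal_mul ht1']
    exact mul_le_mul_right hle _
  -- rewrite the distortion bounds using optimality
  rw [hopt] at hSXdis hPdis
  have hSXdis' : corrDis SX ≤ 2 * (ENNReal.ofReal t * g) := by
    calc corrDis SX ≤ ENNReal.ofReal t * (2 * g) := hSXdis
      _ = 2 * (ENNReal.ofReal t * g) := by ring
  have hPdis' : corrDis P ≤ 2 * (ENNReal.ofReal (1 - t) * g) := by
    calc corrDis P ≤ ENNReal.ofReal (1 - t) * (2 * g) := hPdis
      _ = 2 * (ENNReal.ofReal (1 - t) * g) := by ring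
  have htop1 : 2 * (ENNReal.ofReal t * g) ≠ ⊤ :=
    ENNReal.mul_ne_top ENNReal.ofNat_ne_top (ENNReal.mul_ne_top ENNReal.ofReal_ne_top hg_fin)
  have htop2 : 2 * (ENNReal.ofReal (1 - t) * g) ≠ ⊤ :=
    ENNReal.mul_ne_top ENNReal.ofNat_ne_top (ENNReal.mul_ne_top ENNReal.ofReal_ne_top hg_fin)
  have h2g : 2 * g = 2 * (ENNReal.ofReal t * g) + 2 * (ENNReal.ofReal (1 - t) * g) := by
    rw [← mul_add, ← add_mul, hsplit, one_mul]
  -- upper bounds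
  have hub1 : @ghDist X R mX mt ≤ ENNReal.ofReal t * g :=
    half_le_half (le_trans (two_ghDist_le (Y := R) hSXcorr) hSXdis')
  have hub2 : @ghDist R Y mt mY ≤ ENNReal.ofReal (1 - t) * g :=
    half_le_half (le_trans (two_ghDist_le (X := R) hPcorr) hPdis')
  -- lower bounds
  have hlb1 : ENNReal.ofReal t * g ≤ @ghDist X R mX mt := by
    have key : ∀ S : Set (X × R), IsCorr S →
        2 * (ENNReal.ofReal t * g) ≤ corrDis S := by
      intro S hS
      have h := two_ghDist_le_add (Z := R) hS hPcorr
      rw [show ghDist X Y = g from rfl, h2g] at h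
      have h' : 2 * (ENNReal.ofReal t * g) + 2 * (ENNReal.ofReal (1 - t) * g)
          ≤ corrDis S + 2 * (ENNReal.ofReal (1 - t) * g) :=
        le_trans h (add_le_add_right hPdis' _)
      exact (ENNReal.add_le_add_iff_right htop2).mp h'
    have h : 2 * (ENNReal.ofReal t * g) ≤ 2 * @ghDist X R mX mt := by
      rw [two_ghDist]
      exact le_iInf₂ key
    exact half_le_half h
  have hlb2 : ENNReal.ofReal (1 - t) * g ≤ @ghDist R Y mt mY := by
    have key : ∀ S : Set (R × Y), IsCorr S →
        2 * (ENNReal.ofReal (1 - t) * g) ≤ corrDis S := by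
      intro S hS
      have h := two_ghDist_le_add (Z := R) hSXcorr hS
      rw [show ghDist X Y = g from rfl, h2g] at h
      have h' : 2 * (ENNReal.ofReal (1 - t) * g) + 2 * (ENNReal.ofReal t * g)
          ≤ corrDis S + 2 * (ENNReal.ofReal t * g) := by
        rw [add_comm] at h
        exact le_trans h (by rw [add_comm (corrDis SX)]; exact add_le_add_right hSXdis' _)
      exact (ENNReal.add_le_add_iff_right htop1).mp h'
    have h : 2 * (ENNReal.ofReal (1 - t) * g) ≤ 2 * @ghDist R Y mt mY := by
      rw [two_ghDist]
      exact le_iInf₂ key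
    exact half_le_half h
  have e1 : @ghDist X R mX mt = ENNReal.ofReal t * g := le_antisymm hub1 hlb1
  have e2 : @ghDist R Y mt mY = ENNReal.ofReal (1 - t) * g := le_antisymm hub2 hlb2
  refine ⟨e1, e2, ?_⟩
  rw [e1, e2, ← add_mul, hsplit, one_mul]
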